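/- (Verification of the endpoint-Lipschitz property of the Wasserstein geodesic transport map.) Let 0 < l ≤ L < ∞ and let I = [a,b] be a compact interval. Let F₁, G₁, F₂, G₂, H : I → [0,1] be strictly increasing, continuously differentiable bijections whose derivatives take values in [l, L], with inverse functions F₁⁻¹, G₁⁻¹, F₂⁻¹, G₂⁻¹, H⁻¹ : [0,1] → I. Then [∫₀¹ { F₂⁻¹(F₁(H⁻¹(p))) − G₂⁻¹(G₁(H⁻¹(p))) }² dp ]^{1/2} ≤ √(2L³/l³) · [∫₀¹ (F₁⁻¹(p) − G₁⁻¹(p))² dp]^{1/2} + √(2L/l) · [∫₀¹ (F₂⁻¹(p) − G₂⁻¹(p))² dp]^{1/2}. -/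

import Mathlib

open Set MeasureTheory

/-- A strictly increasing, continuously differentiable CDF of a distribution on the
compact interval `[a,b]`, mapping `[a,b]` bijectively onto `[0,1]`, with density
(derivative) taking values in `[l,L]`, together with its inverse (the quantile
function). -/
structure RegularCDF (a b l L : ℝ) where
  toFun : ℝ → ℝ
  inv : ℝ → ℝ
  der : ℝ → ℝ
  strictMonoOn : StrictMonoOn toFun (Set.Icc a b)
  bijOn : Set.BijOn toFun (Set.Icc a b) (Set.Icc 0 1)
  hasDeriv : ∀ x ∈ Set.Icc a b, HasDerivWithinAt toFun (der x) (Set.Icc a b) x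
  derCont : ContinuousOn der (Set.Icc a b)
  der_mem : ∀ x ∈ Set.Icc a b, der x ∈ Set.Icc l L
  leftInv : ∀ x ∈ Set.Icc a b, inv (toFun x) = x
  rightInv : ∀ p ∈ Set.Icc (0 : ℝ) 1, toFun (inv p) = p
  inv_mapsTo : ∀ p ∈ Set.Icc (0 : ℝ) 1, inv p ∈ Set.Icc a b

namespace RegularCDF

variable {a b l L : ℝ} (R : RegularCDF a b l L)

lemma cont : ContinuousOn R.toFun (Icc a b) :=
  fun x hx => (R.hasDeriv x hx).continuousWithinAt

lemma hasDerivAt_interior {x : ℝ} (hx : x ∈ Ioo a b) :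
    HasDerivAt R.toFun (R.der x) x :=
  (R.hasDeriv x (Ioo_subset_Icc_self hx)).hasDerivAt (Icc_mem_nhds hx.1 hx.2)

lemma map_left (hab : a ≤ b) : R.toFun a = 0 := by
  obtain ⟨x, hx, hfx⟩ := R.bijOn.surjOn (show (0:ℝ) ∈ Icc 0 1 by simp)
  have h1 : R.toFun a ∈ Icc (0:ℝ) 1 := R.bijOn.mapsTo ⟨le_refl a, hab⟩
  have h2 : R.toFun a ≤ R.toFun x :=
    (R.strictMonoOn.monotoneOn) ⟨le_refl a, hab⟩ hx hx.1
  rw [hfx] at h2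
  linarith [h1.1]

lemma map_right (hab : a ≤ b) : R.toFun b = 1 := by
  obtain ⟨x, hx, hfx⟩ := R.bijOn.surjOn (show (1:ℝ) ∈ Icc 0 1 by simp)
  have h1 : R.toFun b ∈ Icc (0:ℝ) 1 := R.bijOn.mapsTo ⟨hab, le_refl b⟩
  have h2 : R.toFun x ≤ R.toFun b :=
    (R.strictMonoOn.monotoneOn) hx ⟨hab, le_refl b⟩ hx.2
  rw [hfx] at h2
  linarith [h1.2]

lemma inv_zero (hab : a ≤ b) : R.inv 0 = a := by
  have := R.leftInv a ⟨le_refl a, hab⟩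
  rwa [R.map_left hab] at this

lemma inv_one (hab : a ≤ b) : R.inv 1 = b := by
  have := R.leftInv b ⟨hab, le_refl b⟩
  rwa [R.map_right hab] at this

lemma expansive :
    ∀ x ∈ Icc a b, ∀ y ∈ Icc a b, x ≤ y → l * (y - x) ≤ R.toFun y - R.toFun x := by
  apply (convex_Icc a b).mul_sub_le_image_sub_of_le_deriv R.cont
  · intro x hx
    rw [interior_Icc] at hx
    exact (R.hasDerivAt_interior hx).differentiableAt.differentiableWithinAt
  · intro x hx
    rw [interior_Icc] at hx
    rw [(R.hasDerivAt_interior hx).deriv]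
    exact (R.der_mem x (Ioo_subset_Icc_self hx)).1

lemma lipschitz :
    ∀ x ∈ Icc a b, ∀ y ∈ Icc a b, x ≤ y → R.toFun y - R.toFun x ≤ L * (y - x) := by
  intro x hx y hy hxy
  apply (convex_Icc a b).image_sub_le_mul_sub_of_deriv_le R.cont ?_ ?_ x hx y hy hxy
  · intro z hz
    rw [interior_Icc] at hz
    exact (R.hasDerivAt_interior hz).differentiableAt.differentiableWithinAt
  · intro z hz
    rw [interior_Icc] at hz
    rw [(R.hasDerivAt_interior hz).deriv]
    exact (R.der_mem z (Ioo_subset_Icc_self hz)).2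

lemma lipschitz_abs {x y : ℝ} (hx : x ∈ Icc a b) (hy : y ∈ Icc a b) :
    |R.toFun x - R.toFun y| ≤ L * |x - y| := by
  rcases le_total x y with h | h
  · rw [abs_sub_comm, abs_sub_comm x y, abs_of_nonneg (by linarith : (0:ℝ) ≤ y - x),
      abs_of_nonneg (sub_nonneg.2 ((R.strictMonoOn.monotoneOn) hx hy h))]
    exact R.lipschitz x hx y hy h
  · rw [abs_of_nonneg (by linarith : (0:ℝ) ≤ x - y),
      abs_of_nonneg (sub_nonneg.2 ((R.strictMonoOn.monotoneOn) hy hx h))]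
    exact R.lipschitz y hy x hx h

lemma inv_mono {p q : ℝ} (hp : p ∈ Icc (0:ℝ) 1) (hq : q ∈ Icc (0:ℝ) 1) (hpq : p ≤ q) :
    R.inv p ≤ R.inv q := by
  by_contra h
  push_neg at h
  have := R.strictMonoOn (R.inv_mapsTo q hq) (R.inv_mapsTo p hp) h
  rw [R.rightInv p hp, R.rightInv q hq] at this
  linarith

lemma inv_lip (hl : 0 < l) {p q : ℝ} (hp : p ∈ Icc (0:ℝ) 1) (hq : q ∈ Icc (0:ℝ) 1) :
    |R.inv p - R.inv q| ≤ l⁻¹ * |p - q| := by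
  wlog hpq : q ≤ p generalizing p q
  · rw [abs_sub_comm, abs_sub_comm p q]; exact this hq hp (le_of_not_ge hpq)
  have h1 := R.expansive _ (R.inv_mapsTo q hq) _ (R.inv_mapsTo p hp)
    (R.inv_mono hq hp hpq)
  rw [R.rightInv p hp, R.rightInv q hq] at h1
  have h2 : R.inv q ≤ R.inv p := R.inv_mono hq hp hpq
  rw [abs_of_nonneg (by linarith : (0:ℝ) ≤ R.inv p - R.inv q),
    abs_of_nonneg (by linarith : (0:ℝ) ≤ p - q)]
  rw [le_inv_mul_iff₀ hl]
  linarith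

lemma inv_cont (hl : 0 < l) : ContinuousOn R.inv (Icc 0 1) := by
  apply LipschitzOnWith.continuousOn (K := Real.toNNReal l⁻¹)
  apply LipschitzOnWith.of_dist_le_mul
  intro p hp q hq
  rw [Real.dist_eq, Real.dist_eq]
  have := R.inv_lip hl hp hq
  rw [Real.coe_toNNReal _ (by positivity)]
  exact this

lemma inv_mem_Ioo (hab : a ≤ b) {p : ℝ} (hp : p ∈ Ioo (0:ℝ) 1) :
    R.inv p ∈ Ioo a b := by
  have hp' : p ∈ Icc (0:ℝ) 1 := Ioo_subset_Icc_self hp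
  have h := R.inv_mapsTo p hp'
  constructor
  · rcases lt_or_eq_of_le h.1 with h1 | h1
    · exact h1
    · exfalso
      have := R.rightInv p hp'
      rw [← h1, R.map_left hab] at this
      linarith [hp.1]
  · rcases lt_or_eq_of_le h.2 with h1 | h1
    · exact h1
    · exfalso
      have := R.rightInv p hp'
      rw [h1, R.map_right hab] at this
      linarith [hp.2]

lemma inv_hasDerivAt (hab : a ≤ b) (hl : 0 < l) {p : ℝ} (hp : p ∈ Ioo (0:ℝ) 1) :
    HasDerivAt R.inv (R.der (R.inv p))⁻¹ p := by
  have hx : R.inv p ∈ Ioo a b := R.inv_mem_Ioo hab hp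
  apply HasDerivAt.of_local_left_inverse
  · exact (R.inv_cont hl).continuousAt (Icc_mem_nhds hp.1 hp.2)
  · exact R.hasDerivAt_interior hx
  · exact ne_of_gt (lt_of_lt_of_le hl (R.der_mem _ (Ioo_subset_Icc_self hx)).1)
  · filter_upwards [Ioo_mem_nhds hp.1 hp.2] with y hy
    exact R.rightInv y (Ioo_subset_Icc_self hy)

end RegularCDF

open RegularCDF

lemma pt_bound (A B U c : ℝ) (h : A^2 ≤ c * U) : (A + B)^2 ≤ 2 * c * U + 2 * B^2 := by
  nlinarith [sq_nonneg (A - B)]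

/-- `√(x+y) ≤ √x + √y`. -/
lemma sqrt_add_le' {x y : ℝ} (hx : 0 ≤ x) (hy : 0 ≤ y) :
    Real.sqrt (x + y) ≤ Real.sqrt x + Real.sqrt y := by
  rw [← Real.sqrt_sq (add_nonneg (Real.sqrt_nonneg x) (Real.sqrt_nonneg y))]
  apply Real.sqrt_le_sqrt
  nlinarith [Real.sq_sqrt hx, Real.sq_sqrt hy, Real.sqrt_nonneg x, Real.sqrt_nonneg y,
    mul_nonneg (Real.sqrt_nonneg x) (Real.sqrt_nonneg y)]

/-- Change of variables bound: for a nonnegative continuous `φ` on `[0,1]`,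
`∫₀¹ φ(G(H⁻¹ p)) dp ≤ (L/l) ∫₀¹ φ`. -/
lemma cov {a b l L : ℝ} (hab : a < b) (hl : 0 < l) (hlL : l ≤ L)
    (G Hc : RegularCDF a b l L) (φ : ℝ → ℝ)
    (hφc : ContinuousOn φ (Icc 0 1)) (hφ0 : ∀ q ∈ Icc (0:ℝ) 1, 0 ≤ φ q) :
    ∫ p in Ioo (0:ℝ) 1, φ (G.toFun (Hc.inv p)) ≤ (L/l) * ∫ q in Ioo (0:ℝ) 1, φ q := by
  have hL : 0 < L := lt_of_lt_of_le hl hlL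
  set ψ : ℝ → ℝ := fun p => G.toFun (Hc.inv p) with hψ
  set ψ' : ℝ → ℝ := fun p => G.der (Hc.inv p) * (Hc.der (Hc.inv p))⁻¹ with hψ'
  have hmaps : MapsTo Hc.inv (Icc 0 1) (Icc a b) := fun p hp => Hc.inv_mapsTo p hp
  have hψc : ContinuousOn ψ (Icc 0 1) := G.cont.comp (Hc.inv_cont hl) hmaps
  have hderne : ∀ p ∈ Icc (0:ℝ) 1, Hc.der (Hc.inv p) ≠ 0 := fun p hp =>
    ne_of_gt (lt_of_lt_of_le hl (Hc.der_mem _ (hmaps hp)).1)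
  have hψ'c : ContinuousOn ψ' (Icc 0 1) :=
    (G.derCont.comp (Hc.inv_cont hl) hmaps).mul
      ((Hc.derCont.comp (Hc.inv_cont hl) hmaps).inv₀ hderne)
  have hψmaps : MapsTo ψ (Icc 0 1) (Icc 0 1) := fun p hp => G.bijOn.mapsTo (hmaps hp)
  have hψ'lb : ∀ p ∈ Icc (0:ℝ) 1, l / L ≤ ψ' p := by
    intro p hp
    have h1 := (G.der_mem _ (hmaps hp)).1
    have h2 := (Hc.der_mem _ (hmaps hp)).2
    have h3 : 0 < Hc.der (Hc.inv p) := lt_of_lt_of_le hl (Hc.der_mem _ (hmaps hp)).1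
    have : l / L ≤ G.der (Hc.inv p) / Hc.der (Hc.inv p) :=
      div_le_div₀ (by linarith) h1 h3 h2
    simpa [div_eq_mul_inv] using this
  have hψ0 : ψ 0 = 0 := by
    simp only [hψ, Hc.inv_zero hab.le, G.map_left hab.le]
  have hψ1 : ψ 1 = 1 := by
    simp only [hψ, Hc.inv_one hab.le, G.map_right hab.le]
  have huIcc : uIcc (0:ℝ) 1 = Icc 0 1 := uIcc_of_le zero_le_one
  have hψd : ∀ p ∈ Ioo (min (0:ℝ) 1) (max (0:ℝ) 1), HasDerivWithinAt ψ (ψ' p) (Ioi p) p := by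
    intro p hp
    rw [min_eq_left zero_le_one, max_eq_right zero_le_one] at hp
    have h1 : HasDerivAt ψ (ψ' p) p :=
      (G.hasDerivAt_interior (Hc.inv_mem_Ioo hab.le hp)).comp p
        (Hc.inv_hasDerivAt hab.le hl hp)
    exact h1.hasDerivWithinAt
  have key : (∫ x in (0:ℝ)..1, ψ' x • (φ ∘ ψ) x) = ∫ u in (ψ 0)..(ψ 1), φ u := by
    apply intervalIntegral.integral_comp_smul_deriv'' (by rwa [huIcc]) hψd (by rwa [huIcc])
    rw [huIcc]
    exact hφc.mono (image_subset_iff.2 hψmaps)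
  have hcomp : ContinuousOn (fun p => φ (ψ p)) (Icc 0 1) := hφc.comp hψc hψmaps
  have int1 : IntervalIntegrable (fun p => φ (ψ p)) volume 0 1 :=
    hcomp.intervalIntegrable_of_Icc zero_le_one
  have int2 : IntervalIntegrable (fun p => (L/l) * (ψ' p * φ (ψ p))) volume 0 1 :=
    (continuousOn_const.mul (hψ'c.mul hcomp)).intervalIntegrable_of_Icc zero_le_one
  have step1 : (∫ p in (0:ℝ)..1, φ (ψ p)) ≤ ∫ p in (0:ℝ)..1, (L/l) * (ψ' p * φ (ψ p)) := by
    apply intervalIntegral.integral_mono_on zero_le_one int1 int2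
    intro p hp
    have h1 := hψ'lb p hp
    have h2 := hφ0 _ (hψmaps hp)
    have h3 : 1 ≤ (L/l) * ψ' p := by
      have : (L/l) * (l/L) ≤ (L/l) * ψ' p :=
        mul_le_mul_of_nonneg_left h1 (by positivity)
      rwa [div_mul_div_comm, mul_comm L l, div_self (by positivity)] at this
    nlinarith
  calc ∫ p in Ioo (0:ℝ) 1, φ (G.toFun (Hc.inv p))
      = ∫ p in (0:ℝ)..1, φ (ψ p) := by
        rw [intervalIntegral.integral_of_le zero_le_one, integral_Ioc_eq_integral_Ioo]
    _ ≤ ∫ p in (0:ℝ)..1, (L/l) * (ψ' p * φ (ψ p)) := step1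
    _ = (L/l) * ∫ p in (0:ℝ)..1, ψ' p * φ (ψ p) := intervalIntegral.integral_const_mul _ _
    _ = (L/l) * ∫ u in (ψ 0)..(ψ 1), φ u := by
        simp only [smul_eq_mul, Function.comp] at key
        rw [← key]
    _ = (L/l) * ∫ q in Ioo (0:ℝ) 1, φ q := by
        rw [hψ0, hψ1, intervalIntegral.integral_of_le zero_le_one,
          integral_Ioc_eq_integral_Ioo]

theorem wasserstein_transport_endpoint_lipschitz
    (a b l L : ℝ) (hab : a < b) (hl : 0 < l) (hlL : l ≤ L)
    (F₁ G₁ F₂ G₂ H : RegularCDF a b l L) :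
    Real.sqrt (∫ p in Set.Ioo (0 : ℝ) 1,
        (F₂.inv (F₁.toFun (H.inv p)) - G₂.inv (G₁.toFun (H.inv p))) ^ 2) ≤
      Real.sqrt (2 * L ^ 3 / l ^ 3) *
          Real.sqrt (∫ p in Set.Ioo (0 : ℝ) 1, (F₁.inv p - G₁.inv p) ^ 2) +
        Real.sqrt (2 * L / l) *
          Real.sqrt (∫ p in Set.Ioo (0 : ℝ) 1, (F₂.inv p - G₂.inv p) ^ 2) := by
  have hL : 0 < L := lt_of_lt_of_le hl hlL
  set u : ℝ → ℝ := fun q => F₁.inv q - G₁.inv q with hu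
  set v : ℝ → ℝ := fun q => F₂.inv q - G₂.inv q with hv
  have huc : ContinuousOn (fun q => (u q)^2) (Icc 0 1) :=
    (((F₁.inv_cont hl).sub (G₁.inv_cont hl)).pow 2)
  have hvc : ContinuousOn (fun q => (v q)^2) (Icc 0 1) :=
    (((F₂.inv_cont hl).sub (G₂.inv_cont hl)).pow 2)
  -- pointwise bound
  have hmaps : MapsTo H.inv (Icc 0 1) (Icc a b) := fun p hp => H.inv_mapsTo p hp
  have hpt : ∀ p ∈ Icc (0:ℝ) 1,
      (F₂.inv (F₁.toFun (H.inv p)) - G₂.inv (G₁.toFun (H.inv p))) ^ 2 ≤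
        2 * (L/l)^2 * (u (G₁.toFun (H.inv p)))^2 + 2 * (v (G₁.toFun (H.inv p)))^2 := by
    intro p hp
    set x := H.inv p with hx
    have hxm : x ∈ Icc a b := hmaps hp
    set q := G₁.toFun x with hq
    have hqm : q ∈ Icc (0:ℝ) 1 := G₁.bijOn.mapsTo hxm
    have hF₁x : F₁.toFun x ∈ Icc (0:ℝ) 1 := F₁.bijOn.mapsTo hxm
    have hA : |F₂.inv (F₁.toFun x) - F₂.inv q| ≤ l⁻¹ * |F₁.toFun x - q| :=
      F₂.inv_lip hl hF₁x hqm
    have hGinvq : G₁.inv q = x := G₁.leftInv x hxm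
    have hB : |F₁.toFun x - q| ≤ L * |G₁.inv q - F₁.inv q| := by
      have h1 : F₁.toFun x - q = F₁.toFun (G₁.inv q) - F₁.toFun (F₁.inv q) := by
        rw [hGinvq, F₁.rightInv q hqm]
      rw [h1]
      exact F₁.lipschitz_abs (G₁.inv_mapsTo q hqm) (F₁.inv_mapsTo q hqm)
    have hA' : |F₂.inv (F₁.toFun x) - F₂.inv q| ≤ l⁻¹ * L * |u q| := by
      calc |F₂.inv (F₁.toFun x) - F₂.inv q| ≤ l⁻¹ * |F₁.toFun x - q| := hA
        _ ≤ l⁻¹ * (L * |G₁.inv q - F₁.inv q|) :=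
            mul_le_mul_of_nonneg_left hB (by positivity)
        _ = l⁻¹ * L * |G₁.inv q - F₁.inv q| := (mul_assoc _ _ _).symm
        _ = l⁻¹ * L * |u q| := by
            rw [show |G₁.inv q - F₁.inv q| = |u q| from abs_sub_comm _ _]
    set A := F₂.inv (F₁.toFun x) - F₂.inv q with hA0
    set B := F₂.inv q - G₂.inv q with hB0
    have hD : F₂.inv (F₁.toFun x) - G₂.inv q = A + B := by ring
    rw [hD]
    have h1 : |A| * |A| ≤ (l⁻¹ * L * |u q|) * (l⁻¹ * L * |u q|) :=
      mul_self_le_mul_self (abs_nonneg _) hA'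
    have h2 : |A| * |A| = A^2 := by rw [← abs_mul, abs_mul_self]; ring
    have h3 : |u q| * |u q| = (u q)^2 := by rw [← abs_mul, abs_mul_self]; ring
    have hvq : v q = B := rfl
    have hlinv : l⁻¹ * L = L / l := by field_simp
    have hA2 : A^2 ≤ (L/l)^2 * (u q)^2 := by
      rw [← h2, ← hlinv]
      calc |A| * |A| ≤ l⁻¹ * L * |u q| * (l⁻¹ * L * |u q|) := h1
        _ = (l⁻¹ * L)^2 * (|u q| * |u q|) := by ring
        _ = (l⁻¹ * L)^2 * (u q)^2 := by rw [h3]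
    rw [← hvq]
    exact pt_bound A (v q) _ _ hA2
  -- integrability
  have hHinvc := H.inv_cont hl
  have hG₁ψc : ContinuousOn (fun p => G₁.toFun (H.inv p)) (Icc 0 1) :=
    G₁.cont.comp hHinvc hmaps
  have hψmaps : MapsTo (fun p => G₁.toFun (H.inv p)) (Icc 0 1) (Icc 0 1) :=
    fun p hp => G₁.bijOn.mapsTo (hmaps hp)
  have hDc : ContinuousOn (fun p =>
      (F₂.inv (F₁.toFun (H.inv p)) - G₂.inv (G₁.toFun (H.inv p))) ^ 2) (Icc 0 1) := by
    apply ContinuousOn.pow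
    apply ContinuousOn.sub
    · exact (F₂.inv_cont hl).comp (F₁.cont.comp hHinvc hmaps)
        (fun p hp => F₁.bijOn.mapsTo (hmaps hp))
    · exact (G₂.inv_cont hl).comp hG₁ψc hψmaps
  have hRc : ContinuousOn (fun p =>
      2 * (L/l)^2 * (u (G₁.toFun (H.inv p)))^2 + 2 * (v (G₁.toFun (H.inv p)))^2)
      (Icc 0 1) := by
    apply ContinuousOn.add
    · exact continuousOn_const.mul (huc.comp hG₁ψc hψmaps)
    · exact continuousOn_const.mul (hvc.comp hG₁ψc hψmaps)
  have hIoosub : Ioo (0:ℝ) 1 ⊆ Icc 0 1 := Ioo_subset_Icc_self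
  have intD : IntegrableOn (fun p =>
      (F₂.inv (F₁.toFun (H.inv p)) - G₂.inv (G₁.toFun (H.inv p))) ^ 2) (Ioo 0 1) volume :=
    (hDc.integrableOn_Icc).mono_set hIoosub
  have intu : IntegrableOn (fun p => (u (G₁.toFun (H.inv p)))^2) (Ioo 0 1) volume :=
    ((huc.comp hG₁ψc hψmaps).integrableOn_Icc).mono_set hIoosub
  have intv : IntegrableOn (fun p => (v (G₁.toFun (H.inv p)))^2) (Ioo 0 1) volume :=
    ((hvc.comp hG₁ψc hψmaps).integrableOn_Icc).mono_set hIoosub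
  have intR : IntegrableOn (fun p =>
      2 * (L/l)^2 * (u (G₁.toFun (H.inv p)))^2 + 2 * (v (G₁.toFun (H.inv p)))^2)
      (Ioo 0 1) volume :=
    (hRc.integrableOn_Icc).mono_set hIoosub
  -- main integral inequality
  have hmono : (∫ p in Ioo (0:ℝ) 1,
      (F₂.inv (F₁.toFun (H.inv p)) - G₂.inv (G₁.toFun (H.inv p))) ^ 2) ≤
      ∫ p in Ioo (0:ℝ) 1,
        (2 * (L/l)^2 * (u (G₁.toFun (H.inv p)))^2 + 2 * (v (G₁.toFun (H.inv p)))^2) :=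
    setIntegral_mono_on intD intR measurableSet_Ioo (fun p hp => hpt p (hIoosub hp))
  have hsplit : (∫ p in Ioo (0:ℝ) 1,
      (2 * (L/l)^2 * (u (G₁.toFun (H.inv p)))^2 + 2 * (v (G₁.toFun (H.inv p)))^2)) =
      2 * (L/l)^2 * (∫ p in Ioo (0:ℝ) 1, (u (G₁.toFun (H.inv p)))^2) +
      2 * (∫ p in Ioo (0:ℝ) 1, (v (G₁.toFun (H.inv p)))^2) := by
    rw [integral_add (intu.const_mul _) (intv.const_mul _), integral_const_mul,
      integral_const_mul]
  have hcov1 : (∫ p in Ioo (0:ℝ) 1, (u (G₁.toFun (H.inv p)))^2) ≤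
      (L/l) * ∫ q in Ioo (0:ℝ) 1, (u q)^2 :=
    cov hab hl hlL G₁ H (fun q => (u q)^2) huc (fun q _ => sq_nonneg _)
  have hcov2 : (∫ p in Ioo (0:ℝ) 1, (v (G₁.toFun (H.inv p)))^2) ≤
      (L/l) * ∫ q in Ioo (0:ℝ) 1, (v q)^2 :=
    cov hab hl hlL G₁ H (fun q => (v q)^2) hvc (fun q _ => sq_nonneg _)
  have huint0 : 0 ≤ ∫ q in Ioo (0:ℝ) 1, (u q)^2 :=
    setIntegral_nonneg measurableSet_Ioo (fun q _ => sq_nonneg _)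
  have hvint0 : 0 ≤ ∫ q in Ioo (0:ℝ) 1, (v q)^2 :=
    setIntegral_nonneg measurableSet_Ioo (fun q _ => sq_nonneg _)
  have hkey : (∫ p in Ioo (0:ℝ) 1,
      (F₂.inv (F₁.toFun (H.inv p)) - G₂.inv (G₁.toFun (H.inv p))) ^ 2) ≤
      (2 * L^3 / l^3) * (∫ q in Ioo (0:ℝ) 1, (u q)^2) +
      (2 * L / l) * (∫ q in Ioo (0:ℝ) 1, (v q)^2) := by
    have e1 : 2 * (L/l)^2 * ((L/l) * ∫ q in Ioo (0:ℝ) 1, (u q)^2) =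
        (2 * L^3 / l^3) * (∫ q in Ioo (0:ℝ) 1, (u q)^2) := by
      field_simp
    have e2 : 2 * ((L/l) * ∫ q in Ioo (0:ℝ) 1, (v q)^2) =
        (2 * L / l) * (∫ q in Ioo (0:ℝ) 1, (v q)^2) := by
      field_simp
    calc (∫ p in Ioo (0:ℝ) 1,
        (F₂.inv (F₁.toFun (H.inv p)) - G₂.inv (G₁.toFun (H.inv p))) ^ 2)
        ≤ 2 * (L/l)^2 * (∫ p in Ioo (0:ℝ) 1, (u (G₁.toFun (H.inv p)))^2) +
          2 * (∫ p in Ioo (0:ℝ) 1, (v (G₁.toFun (H.inv p)))^2) := by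
          rw [← hsplit]; exact hmono
      _ ≤ 2 * (L/l)^2 * ((L/l) * ∫ q in Ioo (0:ℝ) 1, (u q)^2) +
          2 * ((L/l) * ∫ q in Ioo (0:ℝ) 1, (v q)^2) := by
          gcongr <;> positivity
      _ = (2 * L^3 / l^3) * (∫ q in Ioo (0:ℝ) 1, (u q)^2) +
          (2 * L / l) * (∫ q in Ioo (0:ℝ) 1, (v q)^2) := by rw [e1, e2]
  calc Real.sqrt (∫ p in Ioo (0:ℝ) 1,
        (F₂.inv (F₁.toFun (H.inv p)) - G₂.inv (G₁.toFun (H.inv p))) ^ 2)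
      ≤ Real.sqrt ((2 * L^3 / l^3) * (∫ q in Ioo (0:ℝ) 1, (u q)^2) +
          (2 * L / l) * (∫ q in Ioo (0:ℝ) 1, (v q)^2)) := Real.sqrt_le_sqrt hkey
    _ ≤ Real.sqrt ((2 * L^3 / l^3) * (∫ q in Ioo (0:ℝ) 1, (u q)^2)) +
        Real.sqrt ((2 * L / l) * (∫ q in Ioo (0:ℝ) 1, (v q)^2)) :=
        sqrt_add_le' (by positivity) (by positivity)
    _ = Real.sqrt (2 * L^3 / l^3) * Real.sqrt (∫ q in Ioo (0:ℝ) 1, (u q)^2) +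
        Real.sqrt (2 * L / l) * Real.sqrt (∫ q in Ioo (0:ℝ) 1, (v q)^2) := by
        rw [Real.sqrt_mul (by positivity), Real.sqrt_mul (by positivity)]
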